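/- The similitude group T_𝕊 = {A ∈ M₂(F) : det A ≠ 0 and (transpose A)·𝕊·A = (det A)·𝕊} is exactly the set {M(x,y) : x, y ∈ F, x² + (b/c)·x·y + (a/c)·y² ≠ 0}; that is, an invertible 2×2 matrix A over F satisfies (transpose A)·𝕊·A = (det A)·𝕊 if and only if A = M(x,y) for some x, y ∈ F (necessarily with det M(x,y) ≠ 0). -/

import Mathlib

open Matrix

/-- The parametrizing matrices `M(x,y)` of the similitude group of `𝕊`. -/
def Mmat {F : Type*} [Field F] (a b c x y : F) : Matrix (Fin 2) (Fin 2) F :=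
  !![x + y * b * c⁻¹, y; -y * a * c⁻¹, x]

/-- The similitude group `T_𝕊` of `𝕊 = !![a, b/2; b/2, c]` consists exactly of the matrices
`M(x,y)` with nonzero determinant `x² + (b/c)xy + (a/c)y²`. -/
theorem similitude_group_eq_torus {F : Type*} [Field F] (h2 : (2 : F) ≠ 0)
    (a b c : F) (hc : c ≠ 0) (hdisc : b ^ 2 - 4 * a * c ≠ 0) :
    {A : Matrix (Fin 2) (Fin 2) F |
        A.det ≠ 0 ∧ Aᵀ * !![a, b / 2; b / 2, c] * A = A.det • !![a, b / 2; b / 2, c]}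
      = {A : Matrix (Fin 2) (Fin 2) F |
          ∃ x y : F, x ^ 2 + (b / c) * x * y + (a / c) * y ^ 2 ≠ 0 ∧ A = Mmat a b c x y} := by
  ext A
  simp only [Set.mem_setOf_eq]
  constructor
  · rintro ⟨hdet, hA⟩
    set p := A 0 0 with hp
    set q := A 0 1 with hq
    set r := A 1 0 with hr
    set s := A 1 1 with hs
    have e01 := congrFun (congrFun hA 0) 1
    have e11 := congrFun (congrFun hA 1) 1
    simp only [Matrix.mul_apply, Fin.sum_univ_two, Matrix.det_fin_two, Matrix.smul_apply,
      Matrix.transpose_apply, Matrix.cons_val', Matrix.cons_val_zero, Matrix.cons_val_one,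
      Matrix.head_cons, Matrix.head_fin_const, Matrix.empty_val', Matrix.cons_val_fin_one,
      smul_eq_mul, Matrix.of_apply, ← hp, ← hq, ← hr, ← hs] at e01 e11
    field_simp at e01 e11
    -- E01 : a*p*q + b*q*r + c*r*s = 0
    have E01 : a * p * q + b * q * r + c * r * s = 0 := by
      have h : 2 * (a * p * q + b * q * r + c * r * s) = 0 := by linear_combination e01
      rcases mul_eq_zero.mp h with h' | h'
      · exact absurd h' h2
      · exact h'
    -- E11 : a*q^2 + b*q*s + c*s^2 = c * (p*s - q*r)
    have E11 : a * q ^ 2 + b * q * s + c * s ^ 2 = c * (p * s - q * r) := by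
      have : 2 * (a * q ^ 2 + b * q * s + c * s ^ 2 - c * (p * s - q * r)) = 0 := by
        linear_combination e11
      rcases mul_eq_zero.mp this with h | h
      · exact absurd h h2
      · linear_combination h
    have hdet2 : p * s - q * r ≠ 0 := by
      rw [Matrix.det_fin_two, ← hp, ← hq, ← hr, ← hs] at hdet
      exact hdet
    have hD : a * q ^ 2 + b * q * s + c * s ^ 2 ≠ 0 := by
      rw [E11]
      exact mul_ne_zero hc hdet2
    set u := c * r + a * q with hu_def
    set v := c * (p - s) - b * q with hv_def
    have hE01' : a * q * v + (b * q + c * s) * u = 0 := by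
      rw [hu_def, hv_def]; linear_combination c * E01
    have hE11' : q * u - s * v = 0 := by
      rw [hu_def, hv_def]; linear_combination E11
    have hu : u = 0 := by
      have : u * (a * q ^ 2 + b * q * s + c * s ^ 2) = 0 := by
        linear_combination s * hE01' + a * q * hE11'
      exact (mul_eq_zero.mp this).resolve_right hD
    have hv : v = 0 := by
      have : v * (a * q ^ 2 + b * q * s + c * s ^ 2) = 0 := by
        linear_combination q * hE01' - (b * q + c * s) * hE11'
      exact (mul_eq_zero.mp this).resolve_right hD
    rw [hu_def] at hu
    rw [hv_def] at hv
    refine ⟨s, q, ?_, ?_⟩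
    · intro h
      apply hD
      have : c * (s ^ 2 + b / c * s * q + a / c * q ^ 2) = a * q ^ 2 + b * q * s + c * s ^ 2 := by
        field_simp; ring
      rw [← this, h, mul_zero]
    · have hp' : p = s + q * b * c⁻¹ := by field_simp; linear_combination hv
      have hr' : r = -q * a * c⁻¹ := by field_simp; linear_combination hu
      rw [Mmat, Matrix.eta_fin_two A, ← hp, ← hq, ← hr, ← hs, hp', hr']
  · rintro ⟨x, y, hne, rfl⟩
    have hdetM : (Mmat a b c x y).det = x ^ 2 + (b / c) * x * y + (a / c) * y ^ 2 := by
      rw [Mmat, Matrix.det_fin_two_of]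
      field_simp
      ring
    refine ⟨by rw [hdetM]; exact hne, ?_⟩
    have hcc : c * c⁻¹ = 1 := mul_inv_cancel₀ hc
    have hT : (Mmat a b c x y)ᵀ = !![x + y * b * c⁻¹, -y * a * c⁻¹; y, x] := by
      ext i j
      fin_cases i <;> fin_cases j <;> rfl
    rw [hT, Mmat]
    ext i j
    fin_cases i <;> fin_cases j
    · simp [Mmat, Matrix.mul_apply, Fin.sum_univ_two, Matrix.det_fin_two_of]
      generalize hH : b / 2 = hh
      have hb : b = 2 * hh := by rw [← hH]; field_simp
      rw [hb]
      linear_combination (a ^ 2 * c⁻¹ * y ^ 2) * hcc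
    · simp [Mmat, Matrix.mul_apply, Fin.sum_univ_two, Matrix.det_fin_two_of]
      generalize hH : b / 2 = hh
      have hb : b = 2 * hh := by rw [← hH]; field_simp
      rw [hb]
      linear_combination (-(a * x * y)) * hcc
    · simp [Mmat, Matrix.mul_apply, Fin.sum_univ_two, Matrix.det_fin_two_of]
      generalize hH : b / 2 = hh
      have hb : b = 2 * hh := by rw [← hH]; field_simp
      rw [hb]
      linear_combination (-(a * x * y)) * hcc
    · simp [Mmat, Matrix.mul_apply, Fin.sum_univ_two, Matrix.det_fin_two_of]
      generalize hH : b / 2 = hh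
      have hb : b = 2 * hh := by rw [← hH]; field_simp
      rw [hb]
      linear_combination (-2 * hh * x * y - a * y ^ 2) * hcc
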